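/- Let D be a squarefree positive integer and r a positive divisor of D. For every nonzero integer n, Σ_{ℓ | D/r} μ(ℓ) Σ_{k | rℓ} μ(k) e_k(n) equals 1 if gcd(n, D) = r and equals 0 otherwise, where the sums run over positive divisors, μ is the Möbius function, and e_k(n) = 1 if gcd(n, k) = 1 and e_k(n) = 0 otherwise. -/

import Mathlib

open ArithmeticFunction
open scoped ArithmeticFunction.Moebius ArithmeticFunction.zeta

private theorem sum_mu_divisors (m : ℕ) :
    (∑ d ∈ m.divisors, (μ d : ℤ)) = if m = 1 then 1 else 0 := by
  have h : (∑ d ∈ m.divisors, (μ d : ℤ)) = (μ * ζ : ArithmeticFunction ℤ) m :=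
    (coe_mul_zeta_apply).symm
  rw [h, moebius_mul_coe_zeta, one_apply]

private theorem innerSumMoebius (m : ℕ) (hm : Squarefree m) (n : ℤ) (hn : n ≠ 0) :
    (∑ k ∈ m.divisors, (μ k) * (if Int.gcd n k = 1 then (1 : ℤ) else 0)) =
      if (m : ℤ) ∣ n then 1 else 0 := by
  have hm0 : m ≠ 0 := hm.ne_zero
  set N := n.natAbs with hN
  have hN0 : N ≠ 0 := Int.natAbs_ne_zero.mpr hn
  set g := Nat.gcd m N with hg
  have hgdvd : g ∣ m := Nat.gcd_dvd_left m N
  have hgN : g ∣ N := Nat.gcd_dvd_right m N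
  have hsplit : g * (m / g) = m := Nat.mul_div_cancel' hgdvd
  have hcop : Nat.Coprime g (m / g) := by
    have hsq := hm
    rw [← hsplit] at hsq
    exact (Nat.squarefree_mul_iff.mp hsq).1
  have hgcdcast : ∀ k : ℕ, Int.gcd n (k : ℤ) = Nat.gcd N k := by
    intro k
    simp [Int.gcd, Int.natAbs_natCast, hN]
  have h1 : (∑ k ∈ m.divisors, (μ k) * (if Int.gcd n k = 1 then (1 : ℤ) else 0))
      = ∑ k ∈ m.divisors.filter (fun k => Nat.gcd N k = 1), (μ k : ℤ) := by
    rw [Finset.sum_filter]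
    refine Finset.sum_congr rfl fun k _ => ?_
    rw [hgcdcast k]
    split <;> simp
  have hfilter : m.divisors.filter (fun k => Nat.gcd N k = 1) = (m / g).divisors := by
    ext k
    simp only [Finset.mem_filter, Nat.mem_divisors]
    constructor
    · rintro ⟨⟨hk, _⟩, hcopk⟩
      have hkN : Nat.Coprime k N := (Nat.coprime_comm.mp hcopk)
      have hkg : Nat.Coprime k g := hkN.coprime_dvd_right hgN
      refine ⟨hkg.dvd_of_dvd_mul_left ?_, ?_⟩
      · rw [hsplit]; exact hk
      · intro h0
        rw [h0, Nat.mul_zero] at hsplit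
        exact hm0 hsplit.symm
    · rintro ⟨hk, _⟩
      have hkm : k ∣ m := hk.trans (Nat.div_dvd_of_dvd hgdvd)
      refine ⟨⟨hkm, hm0⟩, ?_⟩
      have hd1 : Nat.gcd N k ∣ g := Nat.dvd_gcd ((Nat.gcd_dvd_right N k).trans hkm)
        (Nat.gcd_dvd_left N k)
      have hd2 : Nat.gcd N k ∣ m / g := (Nat.gcd_dvd_right N k).trans hk
      exact Nat.dvd_one.mp (hcop ▸ Nat.dvd_gcd hd1 hd2)
  rw [h1, hfilter, sum_mu_divisors]
  have hiff : m / g = 1 ↔ (m : ℤ) ∣ n := by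
    rw [Int.natCast_dvd]
    constructor
    · intro h
      have : m = g := by
        rw [← hsplit, h, Nat.mul_one]
      rw [this]; exact hgN
    · intro h
      have : g = m := Nat.dvd_antisymm hgdvd (Nat.dvd_gcd dvd_rfl h)
      rw [this, Nat.div_self (Nat.pos_of_ne_zero hm0)]
  simp only [hiff]

theorem moebius_gcd_indicator
    (D r : ℕ) (hD : Squarefree D) (hDpos : 0 < D) (hr : r ∣ D) (hrpos : 0 < r)
    (n : ℤ) (hn : n ≠ 0) :
    (∑ ℓ ∈ (D / r).divisors, (μ ℓ) *
        ∑ k ∈ (r * ℓ).divisors, (μ k) * (if Int.gcd n k = 1 then (1 : ℤ) else 0)) =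
      (if Int.gcd n D = r then (1 : ℤ) else 0) := by
  have hD0 : D ≠ 0 := hDpos.ne'
  set N := n.natAbs with hN
  have hN0 : N ≠ 0 := Int.natAbs_ne_zero.mpr hn
  have hsplit : r * (D / r) = D := Nat.mul_div_cancel' hr
  have hDr0 : D / r ≠ 0 := by
    intro h0
    rw [h0, Nat.mul_zero] at hsplit
    exact hD0 hsplit.symm
  have hcop : Nat.Coprime r (D / r) := by
    have hsq := hD
    rw [← hsplit] at hsq
    exact (Nat.squarefree_mul_iff.mp hsq).1
  have hgN : Int.gcd n (D : ℤ) = Nat.gcd N D := by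
    simp [Int.gcd, Int.natAbs_natCast, hN]
  have hinner : ∀ ℓ ∈ (D / r).divisors,
      (μ ℓ) * ∑ k ∈ (r * ℓ).divisors, (μ k) * (if Int.gcd n k = 1 then (1 : ℤ) else 0)
        = (μ ℓ) * (if ((r * ℓ : ℕ) : ℤ) ∣ n then 1 else 0) := by
    intro ℓ hℓ
    rw [Nat.mem_divisors] at hℓ
    have hdvdD : r * ℓ ∣ D := by
      rw [← hsplit]
      exact mul_dvd_mul_left r hℓ.1
    rw [innerSumMoebius (r * ℓ) (hD.squarefree_of_dvd hdvdD) n hn]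
  rw [Finset.sum_congr rfl hinner]
  by_cases hrn : (r : ℤ) ∣ n
  · have hrN : r ∣ N := Int.natCast_dvd.mp hrn
    have hstep : ∀ ℓ ∈ (D / r).divisors,
        (μ ℓ) * (if ((r * ℓ : ℕ) : ℤ) ∣ n then (1:ℤ) else 0)
          = (μ ℓ) * (if ℓ ∣ N then (1:ℤ) else 0) := by
      intro ℓ hℓ
      rw [Nat.mem_divisors] at hℓ
      have hcℓ : Nat.Coprime r ℓ := Nat.Coprime.coprime_dvd_right hℓ.1 hcop
      congr 1
      have : ((r * ℓ : ℕ) : ℤ) ∣ n ↔ ℓ ∣ N := by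
        push_cast
        constructor
        · intro h
          exact Int.natCast_dvd.mp (dvd_of_mul_left_dvd h)
        · intro h
          exact hcℓ.isCoprime.mul_dvd hrn (Int.natCast_dvd.mpr h)
      simp only [this]
    rw [Finset.sum_congr rfl hstep]
    have h2 : (∑ ℓ ∈ (D / r).divisors, (μ ℓ) * (if ℓ ∣ N then (1:ℤ) else 0))
        = ∑ ℓ ∈ (Nat.gcd (D / r) N).divisors, (μ ℓ : ℤ) := by
      simp_rw [mul_ite, mul_one, mul_zero]
      rw [← Finset.sum_filter]
      congr 1
      ext ℓ
      simp only [Finset.mem_filter, Nat.mem_divisors]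
      constructor
      · rintro ⟨⟨h1, _⟩, h2⟩
        exact ⟨Nat.dvd_gcd h1 h2, Nat.gcd_ne_zero_left hDr0⟩
      · rintro ⟨h1, _⟩
        exact ⟨⟨h1.trans (Nat.gcd_dvd_left _ _), hDr0⟩, h1.trans (Nat.gcd_dvd_right _ _)⟩
    rw [h2, sum_mu_divisors]
    have hiff : Nat.gcd (D / r) N = 1 ↔ Int.gcd n D = r := by
      rw [hgN]
      constructor
      · intro h1
        have hNDr : Nat.Coprime N (D / r) := Nat.coprime_comm.mp h1
        have hgDr : Nat.Coprime (Nat.gcd N D) (D / r) :=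
          hNDr.coprime_dvd_left (Nat.gcd_dvd_left N D)
        have hdr : Nat.gcd N D ∣ r := by
          apply hgDr.dvd_of_dvd_mul_right
          rw [hsplit]
          exact Nat.gcd_dvd_right N D
        exact Nat.dvd_antisymm hdr (Nat.dvd_gcd hrN hr)
      · intro h
        set d := Nat.gcd (D / r) N with hd
        have hdr : Nat.Coprime r d :=
          Nat.Coprime.coprime_dvd_right (Nat.gcd_dvd_left _ _) hcop
        have h1 : r * d ∣ N := hdr.mul_dvd_of_dvd_of_dvd hrN (Nat.gcd_dvd_right _ _)
        have h2' : r * d ∣ D := by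
          rw [← hsplit]
          exact mul_dvd_mul_left r (Nat.gcd_dvd_left _ _)
        have h3 : r * d ∣ r := by
          have h4 : r * d ∣ N.gcd D := Nat.dvd_gcd h1 h2'
          rwa [h] at h4
        have h3' : r * d ∣ r * 1 := by rwa [mul_one]
        exact Nat.dvd_one.mp ((mul_dvd_mul_iff_left hrpos.ne').mp h3')
    simp only [hiff]
  · have hstep : ∀ ℓ ∈ (D / r).divisors,
        (μ ℓ) * (if ((r * ℓ : ℕ) : ℤ) ∣ n then (1:ℤ) else 0) = 0 := by
      intro ℓ _
      have : ¬ ((r * ℓ : ℕ) : ℤ) ∣ n := by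
        intro h
        push_cast at h
        exact hrn (dvd_of_mul_right_dvd h)
      rw [if_neg this, mul_zero]
    rw [Finset.sum_congr rfl hstep, Finset.sum_const_zero]
    have : Int.gcd n D ≠ r := by
      intro h
      apply hrn
      rw [← h]
      exact Int.gcd_dvd_left _ _
    rw [if_neg this]
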